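/- Fix π_A ∈ (0,1), μ_A > 0 and μ_N < 0. Define G : [0,1] → [0,1] by G(x) = (1−π_A)·Φ(Φ⁻¹(x)+μ_N) + π_A·Φ(Φ⁻¹(x)+μ_A) for x ∈ (0,1), with G(0) = 0 and G(1) = 1, and set J(x) = x − G(x). Then J has exactly one zero c* in the open interval (0,1), and J(x) ≤ 0 for all x ∈ [0, c*] while J(x) ≥ 0 for all x ∈ [c*, 1]. -/

import Mathlib

open MeasureTheory ProbabilityTheory

/-- The standard normal CDF `Φ`. -/
noncomputable def stdNormalCDF (x : ℝ) : ℝ :=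
  (ProbabilityTheory.gaussianReal 0 1 (Set.Iic x)).toReal

/-- The inverse `Φ⁻¹` of the standard normal CDF (on `(0,1)`). -/
noncomputable def stdNormalQuantile : ℝ → ℝ :=
  Function.invFun stdNormalCDF

open Set Filter Real
open scoped Topology

lemma stdNormalCDF_eq_cdf (x : ℝ) : stdNormalCDF x = cdf (gaussianReal 0 1) x := by
  rw [stdNormalCDF, cdf_eq_real, measureReal_def]

lemma npdf_pos (x : ℝ) : 0 < gaussianPDFReal 0 1 x :=
  gaussianPDFReal_pos 0 1 x one_ne_zero

lemma npdf_cont : Continuous (gaussianPDFReal 0 1) := by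
  rw [gaussianPDFReal_def]
  fun_prop

lemma npdf_integrable : Integrable (gaussianPDFReal 0 1) :=
  integrable_gaussianPDFReal 0 1

lemma stdNormalCDF_integral (x : ℝ) :
    stdNormalCDF x = ∫ t in Iic x, gaussianPDFReal 0 1 t := by
  rw [stdNormalCDF, gaussianReal_apply 0 one_ne_zero, gaussianPDF_def]
  rw [← ofReal_integral_eq_lintegral_ofReal (npdf_integrable.integrableOn)
    (Filter.Eventually.of_forall fun t => (npdf_pos t).le)]
  rw [ENNReal.toReal_ofReal]
  exact integral_nonneg fun t => (npdf_pos t).le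

lemma stdNormalCDF_sub (a b : ℝ) :
    stdNormalCDF b - stdNormalCDF a = ∫ t in a..b, gaussianPDFReal 0 1 t := by
  rw [stdNormalCDF_integral, stdNormalCDF_integral,
    intervalIntegral.integral_Iic_sub_Iic npdf_integrable.integrableOn
      npdf_integrable.integrableOn]

lemma stdNormalCDF_strictMono : StrictMono stdNormalCDF := by
  intro a b hab
  have h : 0 < ∫ t in a..b, gaussianPDFReal 0 1 t :=
    intervalIntegral.intervalIntegral_pos_of_pos
      npdf_integrable.intervalIntegrable (fun t => npdf_pos t) hab
  rw [← stdNormalCDF_sub] at h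
  linarith

lemma stdNormalCDF_hasDerivAt (x : ℝ) :
    HasDerivAt stdNormalCDF (gaussianPDFReal 0 1 x) x := by
  have h : ∀ y : ℝ, stdNormalCDF y = stdNormalCDF 0 + ∫ t in (0:ℝ)..y, gaussianPDFReal 0 1 t := by
    intro y
    rw [← stdNormalCDF_sub]; ring
  have hd : HasDerivAt (fun y => stdNormalCDF 0 + ∫ t in (0:ℝ)..y, gaussianPDFReal 0 1 t)
      (gaussianPDFReal 0 1 x) x := by
    refine HasDerivAt.const_add _ ?_
    exact intervalIntegral.integral_hasDerivAt_right
      npdf_integrable.intervalIntegrable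
      npdf_cont.aestronglyMeasurable.stronglyMeasurableAtFilter
      npdf_cont.continuousAt
  exact hd.congr_of_eventuallyEq (Filter.Eventually.of_forall h)

lemma stdNormalCDF_continuous : Continuous stdNormalCDF :=
  continuous_iff_continuousAt.2 fun x => (stdNormalCDF_hasDerivAt x).continuousAt

lemma stdNormalCDF_tendsto_atBot : Tendsto stdNormalCDF atBot (𝓝 0) := by
  have := tendsto_cdf_atBot (gaussianReal 0 1)
  refine this.congr fun x => (stdNormalCDF_eq_cdf x).symm

lemma stdNormalCDF_tendsto_atTop : Tendsto stdNormalCDF atTop (𝓝 1) := by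
  have := tendsto_cdf_atTop (gaussianReal 0 1)
  refine this.congr fun x => (stdNormalCDF_eq_cdf x).symm

lemma stdNormalCDF_mem_Ioo (x : ℝ) : stdNormalCDF x ∈ Ioo (0:ℝ) 1 := by
  constructor
  · have h1 : (0:ℝ) ≤ stdNormalCDF (x - 1) := by
      rw [stdNormalCDF_eq_cdf]; exact cdf_nonneg _ _
    have := stdNormalCDF_strictMono (show x - 1 < x by linarith)
    linarith
  · have h1 : stdNormalCDF (x + 1) ≤ 1 := by
      rw [stdNormalCDF_eq_cdf]; exact cdf_le_one _ _
    have := stdNormalCDF_strictMono (show x < x + 1 by linarith)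
    linarith

lemma stdNormalQuantile_stdNormalCDF (z : ℝ) : stdNormalQuantile (stdNormalCDF z) = z :=
  Function.leftInverse_invFun stdNormalCDF_strictMono.injective z

lemma stdNormalCDF_surj {x : ℝ} (hx : x ∈ Ioo (0:ℝ) 1) : ∃ z, stdNormalCDF z = x := by
  obtain ⟨a, ha⟩ : ∃ a, stdNormalCDF a < x := by
    have := stdNormalCDF_tendsto_atBot.eventually_lt_const hx.1
    exact this.exists
  obtain ⟨b, hb⟩ : ∃ b, x < stdNormalCDF b := by
    have := stdNormalCDF_tendsto_atTop.eventually_const_lt hx.2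
    exact this.exists
  have hab : a ≤ b := by
    by_contra h
    push_neg at h
    exact absurd (stdNormalCDF_strictMono h) (by linarith)
  have := intermediate_value_Icc hab stdNormalCDF_continuous.continuousOn
  obtain ⟨z, _, hz⟩ := this ⟨ha.le, hb.le⟩
  exact ⟨z, hz⟩

lemma stdNormalCDF_stdNormalQuantile {x : ℝ} (hx : x ∈ Ioo (0:ℝ) 1) :
    stdNormalCDF (stdNormalQuantile x) = x :=
  Function.invFun_eq (stdNormalCDF_surj hx)

lemma npdf_shift (z μ : ℝ) :
    gaussianPDFReal 0 1 (z + μ) =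
      gaussianPDFReal 0 1 z * rexp (-μ * z - μ^2 / 2) := by
  simp only [gaussianPDFReal, NNReal.coe_one, mul_one, sub_zero]
  rw [mul_assoc, ← Real.exp_add]
  ring_nf

lemma strictConvexOn_cexp {c a d : ℝ} (hc : 0 < c) (ha : a ≠ 0) :
    StrictConvexOn ℝ univ (fun z => c * rexp (a * z - d)) := by
  refine ⟨convex_univ, fun x _ y _ hxy p q hp hq hpq => ?_⟩
  have hne : a * x - d ≠ a * y - d := by
    intro h
    exact hxy (mul_left_cancel₀ ha (by linarith))
  have h := strictConvexOn_exp.2 (mem_univ (a * x - d)) (mem_univ (a * y - d)) hne hp hq hpq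
  simp only [smul_eq_mul] at h ⊢
  have harg : a * (p * x + q * y) - d = p * (a * x - d) + q * (a * y - d) := by
    linear_combination d * hpq
  rw [harg]
  nlinarith [h, hc]

lemma strictConvexOn_lt_one {f : ℝ → ℝ} (hfc : StrictConvexOn ℝ univ f) {a b w : ℝ}
    (h1 : a < w) (h2 : w < b) (hfa : f a ≤ 1) (hfb : f b ≤ 1) : f w < 1 := by
  have hab : a ≠ b := by linarith
  have hba : 0 < b - a := by linarith
  set p := (b - w) / (b - a) with hpdef
  set q := (w - a) / (b - a) with hqdef
  have hp : 0 < p := div_pos (by linarith) hba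
  have hq : 0 < q := div_pos (by linarith) hba
  have hpq : p + q = 1 := by rw [hpdef, hqdef]; field_simp; ring
  have hw : p • a + q • b = w := by
    simp only [smul_eq_mul, hpdef, hqdef]; field_simp; ring
  have h := hfc.2 (mem_univ a) (mem_univ b) hab hp hq hpq
  rw [hw] at h
  simp only [smul_eq_mul] at h
  nlinarith

noncomputable def Hfun (πA μA μN z : ℝ) : ℝ :=
  stdNormalCDF z - ((1 - πA) * stdNormalCDF (z + μN) + πA * stdNormalCDF (z + μA))

noncomputable def ffun (πA μA μN z : ℝ) : ℝ :=
  (1 - πA) * rexp (-μN * z - μN ^ 2 / 2) + πA * rexp (-μA * z - μA ^ 2 / 2)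

lemma ffun_continuous (πA μA μN : ℝ) : Continuous (ffun πA μA μN) := by
  unfold ffun; fun_prop

lemma Hfun_hasDerivAt (πA μA μN z : ℝ) :
    HasDerivAt (Hfun πA μA μN) (gaussianPDFReal 0 1 z * (1 - ffun πA μA μN z)) z := by
  have h1 : HasDerivAt (fun z => stdNormalCDF (z + μN)) (gaussianPDFReal 0 1 (z + μN)) z := by
    exact (stdNormalCDF_hasDerivAt (z + μN)).comp_add_const z μN
  have h2 : HasDerivAt (fun z => stdNormalCDF (z + μA)) (gaussianPDFReal 0 1 (z + μA)) z := by
    exact (stdNormalCDF_hasDerivAt (z + μA)).comp_add_const z μA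
  have h := (stdNormalCDF_hasDerivAt z).sub ((h1.const_mul (1 - πA)).add (h2.const_mul πA))
  refine h.congr_deriv ?_
  rw [npdf_shift, npdf_shift, ffun]
  ring

lemma Hfun_continuous (πA μA μN : ℝ) : Continuous (Hfun πA μA μN) :=
  continuous_iff_continuousAt.2 fun z => (Hfun_hasDerivAt πA μA μN z).continuousAt

lemma Hfun_tendsto_atBot (πA μA μN : ℝ) : Tendsto (Hfun πA μA μN) atBot (𝓝 0) := by
  have hN : Tendsto (fun z => stdNormalCDF (z + μN)) atBot (𝓝 0) :=
    stdNormalCDF_tendsto_atBot.comp (tendsto_atBot_add_const_right atBot μN tendsto_id)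
  have hA : Tendsto (fun z => stdNormalCDF (z + μA)) atBot (𝓝 0) :=
    stdNormalCDF_tendsto_atBot.comp (tendsto_atBot_add_const_right atBot μA tendsto_id)
  have h := stdNormalCDF_tendsto_atBot.sub ((hN.const_mul (1 - πA)).add (hA.const_mul πA))
  convert h using 2
  · rfl
  · ring

lemma Hfun_tendsto_atTop (πA μA μN : ℝ) : Tendsto (Hfun πA μA μN) atTop (𝓝 0) := by
  have hN : Tendsto (fun z => stdNormalCDF (z + μN)) atTop (𝓝 1) :=
    stdNormalCDF_tendsto_atTop.comp (tendsto_atTop_add_const_right atTop μN tendsto_id)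
  have hA : Tendsto (fun z => stdNormalCDF (z + μA)) atTop (𝓝 1) :=
    stdNormalCDF_tendsto_atTop.comp (tendsto_atTop_add_const_right atTop μA tendsto_id)
  have h := stdNormalCDF_tendsto_atTop.sub ((hN.const_mul (1 - πA)).add (hA.const_mul πA))
  convert h using 2
  · rfl
  · ring

lemma ffun_strictConvexOn {πA μA μN : ℝ} (hπ : πA ∈ Ioo (0:ℝ) 1) (hA : 0 < μA) (hN : μN < 0) :
    StrictConvexOn ℝ univ (ffun πA μA μN) := by
  have h1 : StrictConvexOn ℝ univ (fun z => (1 - πA) * rexp (-μN * z - μN ^ 2 / 2)) :=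
    strictConvexOn_cexp (by linarith [hπ.2]) (by linarith)
  have h2 : StrictConvexOn ℝ univ (fun z => πA * rexp (-μA * z - μA ^ 2 / 2)) :=
    strictConvexOn_cexp hπ.1 (by linarith)
  exact h1.add h2

lemma ffun_eventually_gt_atTop {πA μA μN : ℝ} (hπ : πA ∈ Ioo (0:ℝ) 1) (hA : 0 < μA)
    (hN : μN < 0) : ∀ᶠ z in atTop, 1 < ffun πA μA μN z := by
  have hlin : Tendsto (fun z : ℝ => -μN * z - μN ^ 2 / 2) atTop atTop :=
    tendsto_atTop_add_const_right atTop _ (tendsto_id.const_mul_atTop (by linarith))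
  have hexp : Tendsto (fun z : ℝ => (1 - πA) * rexp (-μN * z - μN ^ 2 / 2)) atTop atTop :=
    (tendsto_exp_atTop.comp hlin).const_mul_atTop (by linarith [hπ.2])
  filter_upwards [hexp.eventually_gt_atTop 1] with z hz
  have : 0 < πA * rexp (-μA * z - μA ^ 2 / 2) := mul_pos hπ.1 (exp_pos _)
  simp only [ffun]
  nlinarith [hπ.1]

lemma ffun_eventually_gt_atBot {πA μA μN : ℝ} (hπ : πA ∈ Ioo (0:ℝ) 1) (hA : 0 < μA)
    (hN : μN < 0) : ∀ᶠ z in atBot, 1 < ffun πA μA μN z := by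
  have h0 : Tendsto (fun z : ℝ => -μA * z) atBot atTop :=
    (tendsto_neg_atBot_atTop.const_mul_atTop hA).congr fun z => by ring
  have hlin : Tendsto (fun z : ℝ => -μA * z - μA ^ 2 / 2) atBot atTop :=
    tendsto_atTop_add_const_right atBot _ h0
  have hexp : Tendsto (fun z : ℝ => πA * rexp (-μA * z - μA ^ 2 / 2)) atBot atTop :=
    (tendsto_exp_atTop.comp hlin).const_mul_atTop hπ.1
  filter_upwards [hexp.eventually_gt_atTop 1] with z hz
  have : 0 < (1 - πA) * rexp (-μN * z - μN ^ 2 / 2) := by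
    have := exp_pos (-μN * z - μN ^ 2 / 2)
    nlinarith [hπ.2]
  simp only [ffun]
  nlinarith

lemma Hsign {πA μA μN : ℝ} (hπ : πA ∈ Ioo (0:ℝ) 1) (hA : 0 < μA) (hN : μN < 0) :
    ∃ c : ℝ, (∀ z, z < c → Hfun πA μA μN z < 0) ∧ Hfun πA μA μN c = 0 ∧
      (∀ z, c < z → 0 < Hfun πA μA μN z) := by
  set H := Hfun πA μA μN with hHdef
  set f := ffun πA μA μN with hfdef
  have hfc : StrictConvexOn ℝ univ f := ffun_strictConvexOn hπ hA hN
  have hHderiv : ∀ z, deriv H z = gaussianPDFReal 0 1 z * (1 - f z) := fun z =>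
    (Hfun_hasDerivAt πA μA μN z).deriv
  -- nonemptiness of S
  have hSne : ∃ z0, f z0 < 1 := by
    by_contra hcon
    push_neg at hcon
    have hdiff : Differentiable ℝ H := fun z => (Hfun_hasDerivAt πA μA μN z).differentiableAt
    have hanti : Antitone H := by
      apply antitone_of_deriv_nonpos hdiff
      intro z
      rw [hHderiv z]
      have := npdf_pos z
      nlinarith [hcon z]
    have hH0 : ∀ z, H z = 0 := by
      intro z
      have hle : H z ≤ 0 := by
        refine ge_of_tendsto (Hfun_tendsto_atBot πA μA μN) ?_
        filter_upwards [eventually_le_atBot z] with w hw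
        exact hanti hw
      have hge : 0 ≤ H z := by
        refine le_of_tendsto (Hfun_tendsto_atTop πA μA μN) ?_
        filter_upwards [eventually_ge_atTop z] with w hw
        exact hanti hw
      linarith
    have hf1 : ∀ z, f z = 1 := by
      intro z
      have h0 : HasDerivAt H 0 z :=
        (hasDerivAt_const z (0:ℝ)).congr_of_eventuallyEq
          (Filter.Eventually.of_forall fun w => hH0 w)
      have hz : gaussianPDFReal 0 1 z * (1 - f z) = 0 := (Hfun_hasDerivAt πA μA μN z).unique h0
      rcases mul_eq_zero.1 hz with h | h
      · exact absurd h (ne_of_gt (npdf_pos z))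
      · linarith
    have := strictConvexOn_lt_one hfc (show (0:ℝ) < 1 by norm_num)
      (show (1:ℝ) < 2 by norm_num) (hf1 0).le (hf1 2).le
    rw [hf1 1] at this
    exact lt_irrefl _ this
  obtain ⟨z0, hz0⟩ := hSne
  set S := {z : ℝ | f z < 1} with hSdef
  have hz0S : z0 ∈ S := hz0
  have hbddAbove : BddAbove S := by
    obtain ⟨M, hM⟩ := (ffun_eventually_gt_atTop hπ hA hN).exists_forall_of_atTop
    exact ⟨M, fun z hz => le_of_not_gt fun hlt => absurd (hM z hlt.le) (not_lt.2 hz.le)⟩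
  have hbddBelow : BddBelow S := by
    obtain ⟨M, hM⟩ := (ffun_eventually_gt_atBot hπ hA hN).exists_forall_of_atBot
    exact ⟨M, fun z hz => le_of_not_gt fun hlt => absurd (hM z hlt.le) (not_lt.2 hz.le)⟩
  set t1 := sInf S with ht1def
  set t2 := sSup S with ht2def
  have hne : S.Nonempty := ⟨z0, hz0S⟩
  have ht1z0 : t1 ≤ z0 := csInf_le hbddBelow hz0S
  have ht2z0 : z0 ≤ t2 := le_csSup hbddAbove hz0S
  have hf_lt_of_le : ∀ z ∈ S, f z < 1 := fun z hz => hz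
  -- f > 1 strictly to the left of t1
  have hfgt1 : ∀ z, z < t1 → 1 < f z := by
    intro z hz
    rcases lt_or_ge 1 (f z) with h | h
    · exact h
    · exfalso
      set w := (z + t1) / 2 with hwdef
      have hzw : z < w := by rw [hwdef]; linarith
      have hwt1 : w < t1 := by rw [hwdef]; linarith
      have hwz0 : w < z0 := lt_of_lt_of_le hwt1 ht1z0
      have : f w < 1 := strictConvexOn_lt_one hfc hzw hwz0 h hz0.le
      exact absurd (csInf_le hbddBelow this) (not_le.2 hwt1)
  have hfgt2 : ∀ z, t2 < z → 1 < f z := by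
    intro z hz
    rcases lt_or_ge 1 (f z) with h | h
    · exact h
    · exfalso
      set w := (t2 + z) / 2 with hwdef
      have hwz : w < z := by rw [hwdef]; linarith
      have ht2w : t2 < w := by rw [hwdef]; linarith
      have hz0w : z0 < w := lt_of_le_of_lt ht2z0 ht2w
      have : f w < 1 := strictConvexOn_lt_one hfc hz0w hwz hz0.le h
      exact absurd (le_csSup hbddAbove this) (not_le.2 ht2w)
  have hflt : ∀ z, t1 < z → z < t2 → f z < 1 := by
    intro z h1 h2
    obtain ⟨a, haS, haz⟩ := exists_lt_of_csInf_lt hne h1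
    obtain ⟨b, hbS, hzb⟩ := exists_lt_of_lt_csSup hne h2
    exact strictConvexOn_lt_one hfc haz hzb haS.le hbS.le
  have Hcont : Continuous H := Hfun_continuous πA μA μN
  -- monotonicity pieces
  have hanti1 : StrictAntiOn H (Iic t1) := by
    refine strictAntiOn_of_deriv_neg (convex_Iic t1) Hcont.continuousOn ?_
    intro z hz
    rw [interior_Iic] at hz
    rw [hHderiv z]
    have := npdf_pos z
    nlinarith [hfgt1 z hz]
  have hmono : StrictMonoOn H (Icc t1 t2) := by
    refine strictMonoOn_of_deriv_pos (convex_Icc t1 t2) Hcont.continuousOn ?_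
    intro z hz
    rw [interior_Icc] at hz
    rw [hHderiv z]
    have := npdf_pos z
    nlinarith [hflt z hz.1 hz.2]
  have hanti2 : StrictAntiOn H (Ici t2) := by
    refine strictAntiOn_of_deriv_neg (convex_Ici t2) Hcont.continuousOn ?_
    intro z hz
    rw [interior_Ici] at hz
    rw [hHderiv z]
    have := npdf_pos z
    nlinarith [hfgt2 z hz]
  -- strict negativity left of t1
  have hneg : ∀ z, z ≤ t1 → H z < 0 := by
    have hle : ∀ z, z ≤ t1 → H z ≤ 0 := by
      intro z hz
      refine ge_of_tendsto (Hfun_tendsto_atBot πA μA μN) ?_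
      filter_upwards [eventually_le_atBot z] with w hw
      rcases eq_or_lt_of_le hw with rfl | hlt
      · exact le_refl _
      · exact (hanti1 (le_trans hw hz) hz hlt).le
    intro z hz
    have h1 : H z < H (z - 1) := hanti1 (by linarith : z - 1 ≤ t1) hz (by linarith)
    have h2 : H (z - 1) ≤ 0 := hle _ (by linarith)
    linarith
  have hpos : ∀ z, t2 ≤ z → 0 < H z := by
    have hge : ∀ z, t2 ≤ z → 0 ≤ H z := by
      intro z hz
      refine le_of_tendsto (Hfun_tendsto_atTop πA μA μN) ?_
      filter_upwards [eventually_ge_atTop z] with w hw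
      rcases eq_or_lt_of_le hw with rfl | hlt
      · exact le_refl _
      · exact (hanti2 hz (le_trans hz hw) hlt).le
    intro z hz
    have h1 : H (z + 1) < H z := hanti2 hz (by linarith : t2 ≤ z + 1) (by linarith)
    have h2 : 0 ≤ H (z + 1) := hge _ (by linarith)
    linarith
  have h12 : t1 < t2 := by
    rcases lt_or_ge t1 t2 with h | h
    · exact h
    · exact absurd (hneg t2 h) (not_lt.2 (hpos t2 le_rfl).le)
  -- IVT
  have hivt := intermediate_value_Ioo h12.le Hcont.continuousOn
  have h0mem : (0:ℝ) ∈ Ioo (H t1) (H t2) := ⟨hneg t1 le_rfl, hpos t2 le_rfl⟩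
  obtain ⟨c, hcmem, hc0⟩ := hivt h0mem
  refine ⟨c, ?_, hc0, ?_⟩
  · intro z hz
    rcases le_or_gt z t1 with h | h
    · exact hneg z h
    · have : H z < H c := hmono ⟨h.le, by linarith [hcmem.2]⟩ ⟨hcmem.1.le, hcmem.2.le⟩ hz
      linarith [hc0]
  · intro z hz
    rcases le_or_gt t2 z with h | h
    · exact hpos z h
    · have : H c < H z := hmono ⟨hcmem.1.le, hcmem.2.le⟩ ⟨by linarith [hcmem.1], h.le⟩ hz
      linarith [hc0]


/-- **Sign pattern of `J(x) = x − G(x)` for the Gaussian mixture p-value CDF.**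
With `G(x) = (1−π_A)Φ(Φ⁻¹(x)+μ_N) + π_A Φ(Φ⁻¹(x)+μ_A)` on `(0,1)`, `G(0)=0`, `G(1)=1`,
the function `J(x) = x − G(x)` has exactly one zero `c*` in `(0,1)`, with `J ≤ 0` on
`[0, c*]` and `J ≥ 0` on `[c*, 1]`. -/
theorem mixture_cdf_gap_unique_zero
    (πA μA μN : ℝ) (hπA : πA ∈ Set.Ioo (0 : ℝ) 1) (hμA : 0 < μA) (hμN : μN < 0)
    (G : ℝ → ℝ)
    (hG : ∀ x ∈ Set.Ioo (0 : ℝ) 1,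
      G x = (1 - πA) * stdNormalCDF (stdNormalQuantile x + μN) +
        πA * stdNormalCDF (stdNormalQuantile x + μA))
    (hG0 : G 0 = 0) (hG1 : G 1 = 1) :
    ∃ c ∈ Set.Ioo (0 : ℝ) 1,
      c - G c = 0 ∧
      (∀ x ∈ Set.Ioo (0 : ℝ) 1, x - G x = 0 → x = c) ∧
      (∀ x ∈ Set.Icc (0 : ℝ) c, x - G x ≤ 0) ∧
      (∀ x ∈ Set.Icc c 1, 0 ≤ x - G x) := by
  obtain ⟨c0, hneg, hc0, hpos⟩ := Hsign hπA hμA hμN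
  set c := stdNormalCDF c0 with hcdef
  have hcIoo : c ∈ Ioo (0:ℝ) 1 := stdNormalCDF_mem_Ioo c0
  have hJ : ∀ x ∈ Ioo (0:ℝ) 1, x - G x = Hfun πA μA μN (stdNormalQuantile x) := by
    intro x hx
    rw [hG x hx, Hfun, stdNormalCDF_stdNormalQuantile hx]
  have hQc : stdNormalQuantile c = c0 := stdNormalQuantile_stdNormalCDF c0
  refine ⟨c, hcIoo, ?_, ?_, ?_, ?_⟩
  · rw [hJ c hcIoo, hQc, hc0]
  · intro x hx hx0
    rw [hJ x hx] at hx0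
    have hq : stdNormalQuantile x = c0 := by
      rcases lt_trichotomy (stdNormalQuantile x) c0 with h | h | h
      · exact absurd hx0 (ne_of_lt (hneg _ h))
      · exact h
      · exact absurd hx0.symm (ne_of_lt (hpos _ h))
    have hx' := stdNormalCDF_stdNormalQuantile hx
    rw [hq] at hx'
    exact hx'.symm
  · intro x hx
    rcases eq_or_lt_of_le hx.1 with h0 | h0
    · rw [← h0, hG0]; norm_num
    · have hx1 : x < 1 := lt_of_le_of_lt hx.2 hcIoo.2
      have hxI : x ∈ Ioo (0:ℝ) 1 := ⟨h0, hx1⟩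
      rw [hJ x hxI]
      have hqle : stdNormalQuantile x ≤ c0 := by
        by_contra h
        push_neg at h
        have h2 := stdNormalCDF_strictMono h
        rw [stdNormalCDF_stdNormalQuantile hxI] at h2
        exact absurd hx.2 (not_le.2 h2)
      rcases eq_or_lt_of_le hqle with heq | hlt
      · rw [heq, hc0]
      · exact (hneg _ hlt).le
  · intro x hx
    rcases eq_or_lt_of_le hx.2 with h1 | h1
    · rw [h1, hG1]; norm_num
    · have hx0 : 0 < x := lt_of_lt_of_le hcIoo.1 hx.1
      have hxI : x ∈ Ioo (0:ℝ) 1 := ⟨hx0, h1⟩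
      rw [hJ x hxI]
      have hqge : c0 ≤ stdNormalQuantile x := by
        by_contra h
        push_neg at h
        have h2 := stdNormalCDF_strictMono h
        rw [stdNormalCDF_stdNormalQuantile hxI] at h2
        exact absurd hx.1 (not_le.2 h2)
      rcases eq_or_lt_of_le hqge with heq | hlt
      · rw [← heq, hc0]
      · exact (hpos _ hlt).le
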